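/- (Anisotropic Hölder bound for the free-transport operator.) Let α ∈ (1,2), β > 0 and T > 0. There exists a constant C = C(d, α, β, T) > 0 such that for every t ∈ [0,T] and every bounded f : ℝ^{2d} → ℝ with ‖f‖_{C^{(1+α)β}_a} < ∞: ‖Γ_t f‖_{C^β_a} ≤ C ( ‖f‖_{C^β_a} + t^β ‖f‖_{C^{(1+α)β}_a} ). -/

import Mathlib

open MeasureTheory Filter Set
open scoped ENNReal NNReal Topology

noncomputable section

abbrev Rd (d : ℕ) : Type := EuclideanSpace ℝ (Fin d)
abbrev R2d (d : ℕ) : Type := Rd d × Rd d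

/-- The free-transport shift operator `Γ_t (x,v) = (x + t v, v)`. -/
def Gam {d : ℕ} (t : ℝ) (z : R2d d) : R2d d := (z.1 + t • z.2, z.2)

/-- The anisotropic quasi-norm `|z|_a = |x|^{1/(1+α)} + |v|`. -/
def anorm {d : ℕ} (α : ℝ) (z : R2d d) : ℝ := ‖z.1‖ ^ (1 / (1 + α)) + ‖z.2‖

/-- Iterated difference operator `δ_h^{(M)}`. -/
def deltaIter {d : ℕ} {E : Type*} [AddCommGroup E] (h : R2d d) :
    ℕ → (R2d d → E) → R2d d → E
  | 0, f => f
  | M + 1, f => fun z => deltaIter h M f (z + h) - deltaIter h M f z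

/-- Anisotropic Hölder–Zygmund norm `‖f‖_{C^s_a}`. -/
def aHolderNorm {d : ℕ} {E : Type*} [NormedAddCommGroup E] (α s : ℝ) (f : R2d d → E) : ℝ≥0∞ :=
  (⨆ z, (‖f z‖₊ : ℝ≥0∞)) +
    ⨆ (h : R2d d) (_ : h ≠ 0) (z : R2d d),
      ENNReal.ofReal (anorm α h ^ (-s) * ‖deltaIter h (⌊s⌋₊ + 1) f z‖)

/-- Hölder–Zygmund norm in the `x`-variable `‖f‖_{C^s_x}`. -/
def xHolderNorm {d : ℕ} {E : Type*} [NormedAddCommGroup E] (s : ℝ) (f : R2d d → E) : ℝ≥0∞ :=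
  (⨆ z, (‖f z‖₊ : ℝ≥0∞)) +
    ⨆ (h : Rd d) (_ : h ≠ 0) (z : R2d d),
      ENNReal.ofReal (‖h‖ ^ (-s) * ‖deltaIter ((h, 0) : R2d d) (⌊s⌋₊ + 1) f z‖)

/-- Conditional `L_p` norm `‖X‖_{L_p(Ω)|G} = (E[|X|^p | G])^{1/p}`. -/
def condLp {Ω : Type*} {m0 : MeasurableSpace Ω} {E : Type*} [NormedAddCommGroup E]
    (m : MeasurableSpace Ω) (P : @Measure Ω m0) (p : ℝ) (X : Ω → E) : Ω → ℝ :=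
  fun ω => (P[fun ω' => ‖X ω'‖ ^ p|m]) ω ^ (1 / p)

/-- The Lévy symbol of the rotationally symmetric `α`-stable process. -/
def stablePhi (d : ℕ) (α : ℝ) (ξ : Rd d) : ℂ :=
  ∫ x in {x : Rd d | x ≠ 0},
    (((1 : ℂ) - Complex.exp (Complex.I * ((inner ℝ ξ x : ℝ) : ℂ))
        + Complex.I * ((inner ℝ ξ x : ℝ) : ℂ) * (if ‖x‖ ≤ 1 then 1 else 0))
      * ((‖x‖ ^ (-(d : ℝ) - α) : ℝ) : ℂ))

/-- `L` is a `d`-dimensional `α`-stable process with respect to the filtration `F`. -/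
def IsStableProcess {Ω : Type*} [mΩ : MeasurableSpace Ω] (d : ℕ) (α : ℝ)
    (P : Measure Ω) (F : Filtration ℝ mΩ) (L : ℝ → Ω → Rd d) : Prop :=
  (∀ ω, L 0 ω = 0) ∧ Adapted F L ∧
  (∀ ω, ∀ t : ℝ, ContinuousWithinAt (fun s => L s ω) (Ici t) t) ∧
  (∀ ω, ∀ t : ℝ, ∃ l, Tendsto (fun s => L s ω) (nhdsWithin t (Iio t)) (nhds l)) ∧
  (∀ s t : ℝ, 0 ≤ s → s ≤ t →
    ProbabilityTheory.Indep
      (MeasurableSpace.comap (fun ω => L t ω - L s ω) inferInstance) (F s) P) ∧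
  (∀ s t : ℝ, 0 ≤ s → s ≤ t → ∀ ξ : Rd d,
    ∫ ω, Complex.exp (Complex.I * ((inner ℝ ξ (L t ω - L s ω) : ℝ) : ℂ)) ∂P
      = Complex.exp (-((t - s : ℝ) : ℂ) * stablePhi d α ξ))

/-- The kinetic noise `M_t = (∫_0^t L_r dr, L_t)`. -/
def Mproc {d : ℕ} {Ω : Type*} (L : ℝ → Ω → Rd d) (t : ℝ) (ω : Ω) : R2d d :=
  (∫ r in (0 : ℝ)..t, L r ω, L t ω)

/-- The grid point `k_n(t) = ⌊nt⌋/n`. -/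
def kn (n : ℕ) (t : ℝ) : ℝ := (⌊(n : ℝ) * t⌋ : ℝ) / (n : ℝ)

/-- `Z = (X,V)` solves the kinetic SDE on `[0,1]`. -/
def SolvesKineticSDE {d : ℕ} {Ω : Type*} [mΩ : MeasurableSpace Ω] (P : Measure Ω)
    (F : Filtration ℝ mΩ) (L : ℝ → Ω → Rd d) (b : R2d d → Rd d) (ξ₀ η₀ : Ω → Rd d)
    (X V : ℝ → Ω → Rd d) : Prop :=
  Adapted F X ∧ Adapted F V ∧
  (∀ᵐ ω ∂P, ∀ t ∈ Icc (0 : ℝ) 1,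
    (X t ω = ξ₀ ω + ∫ s in (0 : ℝ)..t, V s ω) ∧
    (V t ω = η₀ ω + (∫ s in (0 : ℝ)..t, b (X s ω, V s ω)) + L t ω))

/-- `Z^n = (X^n, V^n)` is the Euler scheme on `[0,1]`. -/
def SolvesEuler {d : ℕ} {Ω : Type*} [mΩ : MeasurableSpace Ω] (P : Measure Ω)
    (F : Filtration ℝ mΩ) (L : ℝ → Ω → Rd d) (b : R2d d → Rd d) (ξ₀ η₀ : Ω → Rd d)
    (n : ℕ) (Xn Vn : ℝ → Ω → Rd d) : Prop :=
  Adapted F Xn ∧ Adapted F Vn ∧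
  (∀ᵐ ω ∂P, ∀ t ∈ Icc (0 : ℝ) 1,
    (Xn t ω = ξ₀ ω + ∫ s in (0 : ℝ)..t, Vn s ω) ∧
    (Vn t ω = η₀ ω +
      (∫ s in (0 : ℝ)..t, b (Gam (s - kn n s) (Xn (kn n s) ω, Vn (kn n s) ω))) + L t ω))

/-- Assumption A of the paper. -/
def AssumptionA (d : ℕ) (α β : ℝ) (b : R2d d → Rd d) : Prop :=
  1 - α / 2 < β ∧ β < (α - 1) * (1 + α) ∧
  aHolderNorm α β b < ⊤ ∧ xHolderNorm ((α + β) / (1 + α)) b < ⊤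

/-- The random variable `‖g‖_{C_p^0|G,[S,T]}`. -/
def C0NormRV {Ω : Type*} {m0 : MeasurableSpace Ω} {E : Type*} [NormedAddCommGroup E]
    (G : MeasurableSpace Ω) (P : @Measure Ω m0) (p : ℝ) (g : ℝ → Ω → E) (S T : ℝ) (ω : Ω) : ℝ :=
  ⨆ t : Icc S T, condLp G P p (g t) ω

/-- The random variable `[g]_{C_p^γ|G,[S,T]}`. -/
def CHolderRV {Ω : Type*} {m0 : MeasurableSpace Ω} {E : Type*} [NormedAddCommGroup E]
    (G : MeasurableSpace Ω) (P : @Measure Ω m0) (p γ : ℝ) (g : ℝ → Ω → E) (S T : ℝ) (ω : Ω) : ℝ :=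
  ⨆ q : {q : ℝ × ℝ // S ≤ q.1 ∧ q.1 < q.2 ∧ q.2 ≤ T},
    condLp G P p (fun ω' => g q.1.2 ω' - g q.1.1 ω') ω / (q.1.2 - q.1.1) ^ γ

/-- The random variable `[g]_{𝒮C_p^γ|G,[S,T]}`. -/
def SCHolderRV {Ω : Type*} {m0 : MeasurableSpace Ω} {E : Type*} [NormedAddCommGroup E]
    [NormedSpace ℝ E] [CompleteSpace E]
    (F : Filtration ℝ m0) (G : MeasurableSpace Ω) (P : @Measure Ω m0)
    (p γ : ℝ) (g : ℝ → Ω → E) (S T : ℝ) (ω : Ω) : ℝ :=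
  ⨆ q : {q : ℝ × ℝ // S ≤ q.1 ∧ q.1 < q.2 ∧ q.2 ≤ T},
    condLp G P p (P[fun ω' => ‖g q.1.2 ω' - (P[g q.1.2|F q.1.1]) ω'‖|F q.1.1]) ω
      / (q.1.2 - q.1.1) ^ γ

/-- The kinetic semigroup `P_t f (z) = E f(M_t + Γ_t z)`. -/
def kineticSemigroup {d : ℕ} {Ω : Type*} {m0 : MeasurableSpace Ω} (P : @Measure Ω m0)
    (L : ℝ → Ω → Rd d) (f : R2d d → ℝ) (t : ℝ) (z : R2d d) : ℝ :=
  ∫ ω, f (Mproc L t ω + Gam t z) ∂P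

section TransportAux
variable {d : ℕ}

lemma Gam_add (t : ℝ) (z h : R2d d) : Gam t (z + h) = Gam t z + Gam t h := by
  simp only [Gam, Prod.fst_add, Prod.snd_add, smul_add, Prod.mk_add_mk, Prod.mk.injEq]
  exact ⟨by abel, trivial⟩

lemma deltaIter_comp_Gam (t : ℝ) (f : R2d d → ℝ) (h : R2d d) :
    ∀ (m : ℕ) (z : R2d d),
      deltaIter h m (fun w => f (Gam t w)) z = deltaIter (Gam t h) m f (Gam t z)
  | 0, z => rfl
  | (m+1), z => by
    show deltaIter h m _ (z + h) - deltaIter h m _ z = _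
    rw [deltaIter_comp_Gam t f h m, deltaIter_comp_Gam t f h m, Gam_add]
    rfl

lemma deltaIter_zero_iter (f : R2d d → ℝ) (m : ℕ) (z : R2d d) :
    deltaIter (0 : R2d d) (m+1) f z = 0 := by
  show deltaIter (0:R2d d) m f (z + 0) - deltaIter (0:R2d d) m f z = 0
  rw [add_zero, sub_self]

lemma deltaIter_le_of_le (k : R2d d) (f : R2d d → ℝ) (c : ℝ) (m : ℕ)
    (hc : ∀ z, |deltaIter k m f z| ≤ c) :
    ∀ (e : ℕ) (z : R2d d), |deltaIter k (m+e) f z| ≤ 2^e * c := by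
  intro e
  induction e with
  | zero => simpa using hc
  | succ e ih =>
    intro z
    show |deltaIter k (m+e) f (z + k) - deltaIter k (m+e) f z| ≤ _
    calc |deltaIter k (m+e) f (z + k) - deltaIter k (m+e) f z|
        ≤ |deltaIter k (m+e) f (z + k)| + |deltaIter k (m+e) f z| := abs_sub _ _
      _ ≤ 2^e * c + 2^e * c := add_le_add (ih _) (ih _)
      _ = 2^(e+1) * c := by ring

lemma telescope_sum (g : R2d d → ℝ) (k : R2d d) :
    ∀ (j : ℕ) (z : R2d d), g (z + j • k) - g z
      = ∑ i ∈ Finset.range j, (g (z + i • k + k) - g (z + i • k)) := by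
  intro j
  induction j with
  | zero => intro z; simp
  | succ j ih =>
    intro z
    rw [Finset.sum_range_succ, ← ih z, succ_nsmul, ← add_assoc]
    ring

lemma deltaIter_double (k : R2d d) (f : R2d d → ℝ) :
    ∀ (m : ℕ) (z : R2d d), deltaIter (k + k) m f z
      = ∑ j ∈ Finset.range (m+1), (m.choose j : ℝ) * deltaIter k m f (z + j • k) := by
  intro m
  induction m with
  | zero => intro z; simp; rfl
  | succ m ih =>
    intro z
    have key : ∀ w : R2d d, deltaIter k m f (w + (k + k)) - deltaIter k m f w
        = deltaIter k (m+1) f (w + k) + deltaIter k (m+1) f w := by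
      intro w
      show _ = (deltaIter k m f (w + k + k) - deltaIter k m f (w + k))
        + (deltaIter k m f (w + k) - deltaIter k m f w)
      rw [show w + (k+k) = w + k + k from by abel]
      ring
    show deltaIter (k+k) m f (z + (k+k)) - deltaIter (k+k) m f z = _
    rw [ih, ih, ← Finset.sum_sub_distrib]
    have step1 : ∑ j ∈ Finset.range (m+1),
          ((m.choose j : ℝ) * deltaIter k m f (z + (k+k) + j • k)
            - (m.choose j : ℝ) * deltaIter k m f (z + j • k))
        = ∑ j ∈ Finset.range (m+1),
          ((m.choose j : ℝ) * deltaIter k (m+1) f (z + (j+1) • k)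
            + (m.choose j : ℝ) * deltaIter k (m+1) f (z + j • k)) := by
      refine Finset.sum_congr rfl fun j _ => ?_
      rw [← mul_sub, show z + (k+k) + j • k = z + j • k + (k+k) from by abel,
        key (z + j • k), succ_nsmul, ← add_assoc]
      ring
    rw [step1, Finset.sum_add_distrib]
    have hL : ∑ j ∈ Finset.range (m+1), (m.choose j : ℝ) * deltaIter k (m+1) f (z + j • k)
        = (∑ j ∈ Finset.range (m+1),
            (m.choose (j+1) : ℝ) * deltaIter k (m+1) f (z + (j+1) • k))
          + (m.choose 0 : ℝ) * deltaIter k (m+1) f (z + 0 • k) := by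
      rw [Finset.sum_range_succ' (fun j => (m.choose j : ℝ) * deltaIter k (m+1) f (z + j • k)) m]
      congr 1
      rw [Finset.sum_range_succ]
      simp [Nat.choose_succ_self]
    rw [hL, ← add_assoc, ← Finset.sum_add_distrib]
    rw [Finset.sum_range_succ' (fun j => (((m+1).choose j : ℝ)) * deltaIter k (m+1) f (z + j • k)) (m+1)]
    congr 1
    · refine Finset.sum_congr rfl fun j _ => ?_
      rw [Nat.choose_succ_succ]
      push_cast
      ring
    · simp

def pA {d : ℕ} (α : ℝ) (k : R2d d) : ℝ := ‖k.1‖ ^ (1 / (1 + α))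
def qA {d : ℕ} (k : R2d d) : ℝ := ‖k.2‖

def Gfun {d : ℕ} (α β s A B : ℝ) (k : R2d d) : ℝ :=
  (min (qA k) 1) ^ β * A + min ((min (pA α k) 1) ^ β * A) ((min (pA α k) 1) ^ s * B)

section basic
variable {α β s A B : ℝ}

lemma pA_nonneg (α : ℝ) (k : R2d d) : 0 ≤ pA α k := Real.rpow_nonneg (norm_nonneg _) _
lemma qA_nonneg (k : R2d d) : 0 ≤ qA k := norm_nonneg _
lemma anorm_eq (α : ℝ) (k : R2d d) : anorm α k = pA α k + qA k := rfl
lemma anorm_nonneg (α : ℝ) (k : R2d d) : 0 ≤ anorm α k :=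
  add_nonneg (pA_nonneg α k) (qA_nonneg k)

lemma anorm_pos (hα : α ∈ Ioo (1:ℝ) 2) (k : R2d d) (hk : k ≠ 0) : 0 < anorm α k := by
  rcases eq_or_lt_of_le (anorm_nonneg α k) with h | h
  · exfalso
    have hp : pA α k = 0 ∧ qA k = 0 := by
      constructor <;> nlinarith [pA_nonneg α k, qA_nonneg k, h.symm ▸ (rfl : anorm α k = anorm α k), anorm_eq α k]
    have h1 : ‖k.1‖ = 0 := by
      by_contra hne
      have : (0:ℝ) < ‖k.1‖ := lt_of_le_of_ne (norm_nonneg _) (Ne.symm hne)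
      have : 0 < pA α k := Real.rpow_pos_of_pos this _
      linarith [hp.1]
    have h2 : ‖k.2‖ = 0 := hp.2
    apply hk
    have : k.1 = 0 := norm_eq_zero.mp h1
    have : k.2 = 0 := norm_eq_zero.mp h2
    exact Prod.ext (norm_eq_zero.mp h1) (norm_eq_zero.mp h2)
  · exact h

lemma min_scale_le {c x : ℝ} (hc : 1 ≤ c) (hx : 0 ≤ x) : min (c*x) 1 ≤ c * min x 1 := by
  rcases le_total x 1 with h | h
  · have h1 : c * min x 1 = c * x := by rw [min_eq_left h]
    rw [h1]
    exact min_le_left _ _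
  · have h1 : c * min x 1 = c := by rw [min_eq_right h]; ring
    rw [h1]
    have : min (c*x) 1 ≤ 1 := min_le_right _ _
    linarith

lemma Gfun_nonneg (hA : 0 ≤ A) (hB : 0 ≤ B) (hβ : 0 ≤ β) (hs : 0 ≤ s) (k : R2d d) :
    0 ≤ Gfun α β s A B k := by
  have h1 : (0:ℝ) ≤ (min (qA k) 1) ^ β * A :=
    mul_nonneg (Real.rpow_nonneg (le_min (qA_nonneg k) zero_le_one) _) hA
  have h2 : (0:ℝ) ≤ (min (pA α k) 1) ^ β * A :=
    mul_nonneg (Real.rpow_nonneg (le_min (pA_nonneg α k) zero_le_one) _) hA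
  have h3 : (0:ℝ) ≤ (min (pA α k) 1) ^ s * B :=
    mul_nonneg (Real.rpow_nonneg (le_min (pA_nonneg α k) zero_le_one) _) hB
  exact add_nonneg h1 (le_min h2 h3)

lemma Gfun_smul (c : ℝ) (k : R2d d) (hc : 0 ≤ c) :
    Gfun α β s (c*A) (c*B) k = c * Gfun α β s A B k := by
  unfold Gfun
  rw [mul_add]
  congr 1
  · ring
  · rw [show (min (pA α k) 1) ^ β * (c*A) = c * ((min (pA α k) 1) ^ β * A) from by ring,
      show (min (pA α k) 1) ^ s * (c*B) = c * ((min (pA α k) 1) ^ s * B) from by ring]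
    exact (mul_min_of_nonneg _ _ hc).symm

end basic

section G
variable {α β A B F : ℝ}

lemma qA_smul (k : R2d d) : qA ((2:ℝ) • k) = 2 * qA k := by
  unfold qA
  rw [Prod.smul_snd, norm_smul]
  simp

lemma pA_smul (hα : α ∈ Ioo (1:ℝ) 2) (k : R2d d) :
    pA α ((2:ℝ) • k) = (2:ℝ) ^ (1/(1+α)) * pA α k := by
  unfold pA
  rw [Prod.smul_fst, norm_smul]
  simp only [Real.norm_ofNat]
  rw [Real.mul_rpow (by norm_num) (norm_nonneg _)]

lemma one_le_two_rpow {e : ℝ} (he : 0 ≤ e) : (1:ℝ) ≤ (2:ℝ) ^ e :=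
  Real.one_le_rpow one_le_two he

lemma Gfun_double (hα : α ∈ Ioo (1:ℝ) 2) (hβ : 0 < β) (hA : 0 ≤ A) (hB : 0 ≤ B) (k : R2d d) :
    Gfun α β ((1+α)*β) A B ((2:ℝ) • k) ≤ (2:ℝ)^β * Gfun α β ((1+α)*β) A B k := by
  obtain ⟨hα1, hα2⟩ := hα
  have hθpos : 0 < 1/(1+α) := by positivity
  have hθle : 1/(1+α) ≤ 1 := by
    rw [div_le_one (by linarith)]; linarith
  have hθs : (1/(1+α)) * ((1+α)*β) = β := by field_simp
  have hq0 := qA_nonneg k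
  have hp0 := pA_nonneg α k
  have hminq : (0:ℝ) ≤ min (qA k) 1 := le_min hq0 zero_le_one
  have hminp : (0:ℝ) ≤ min (pA α k) 1 := le_min hp0 zero_le_one
  have hterm1 : (min (qA ((2:ℝ)•k)) 1) ^ β * A ≤ (2:ℝ)^β * ((min (qA k) 1) ^ β * A) := by
    rw [qA_smul]
    have h1 : min (2 * qA k) 1 ≤ 2 * min (qA k) 1 := min_scale_le one_le_two hq0
    have h2 : (min (2 * qA k) 1) ^ β ≤ (2 * min (qA k) 1) ^ β :=
      Real.rpow_le_rpow (le_min (by linarith) zero_le_one) h1 hβ.le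
    have h3 : (2 * min (qA k) 1) ^ β = (2:ℝ)^β * (min (qA k) 1)^β :=
      Real.mul_rpow (by norm_num) hminq
    calc (min (2*qA k) 1)^β * A ≤ (2*min (qA k) 1)^β * A := by
          exact mul_le_mul_of_nonneg_right h2 hA
      _ = (2:ℝ)^β * ((min (qA k) 1)^β * A) := by rw [h3]; ring
  -- p part
  have hps : min (pA α ((2:ℝ)•k)) 1 ≤ (2:ℝ)^(1/(1+α)) * min (pA α k) 1 := by
    rw [pA_smul ⟨hα1,hα2⟩]
    exact min_scale_le (one_le_two_rpow hθpos.le) hp0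
  have hmp2 : (0:ℝ) ≤ min (pA α ((2:ℝ)•k)) 1 := le_min (pA_nonneg α _) zero_le_one
  have hbrA : (min (pA α ((2:ℝ)•k)) 1) ^ β * A ≤ (2:ℝ)^β * ((min (pA α k) 1)^β * A) := by
    have h2 : (min (pA α ((2:ℝ)•k)) 1) ^ β ≤ ((2:ℝ)^(1/(1+α)) * min (pA α k) 1) ^ β :=
      Real.rpow_le_rpow hmp2 hps hβ.le
    have h3 : ((2:ℝ)^(1/(1+α)) * min (pA α k) 1) ^ β
        = (2:ℝ)^((1/(1+α))*β) * (min (pA α k) 1)^β := by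
      rw [Real.mul_rpow (Real.rpow_nonneg (by norm_num) _) hminp,
        ← Real.rpow_mul (by norm_num : (0:ℝ) ≤ 2)]
    have h4 : (2:ℝ)^((1/(1+α))*β) ≤ (2:ℝ)^β := by
      apply Real.rpow_le_rpow_of_exponent_le one_le_two
      nlinarith
    calc (min (pA α ((2:ℝ)•k)) 1) ^ β * A ≤ ((2:ℝ)^((1/(1+α))*β) * (min (pA α k) 1)^β) * A := by
          rw [← h3]; exact mul_le_mul_of_nonneg_right h2 hA
      _ ≤ ((2:ℝ)^β * (min (pA α k) 1)^β) * A := by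
          have : (0:ℝ) ≤ (min (pA α k) 1)^β := Real.rpow_nonneg hminp _
          apply mul_le_mul_of_nonneg_right _ hA
          exact mul_le_mul_of_nonneg_right h4 this
      _ = (2:ℝ)^β * ((min (pA α k) 1)^β * A) := by ring
  have hbrB : (min (pA α ((2:ℝ)•k)) 1) ^ ((1+α)*β) * B
      ≤ (2:ℝ)^β * ((min (pA α k) 1)^((1+α)*β) * B) := by
    have hs0 : (0:ℝ) ≤ (1+α)*β := by nlinarith
    have h2 : (min (pA α ((2:ℝ)•k)) 1) ^ ((1+α)*β)
        ≤ ((2:ℝ)^(1/(1+α)) * min (pA α k) 1) ^ ((1+α)*β) :=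
      Real.rpow_le_rpow hmp2 hps hs0
    have h3 : ((2:ℝ)^(1/(1+α)) * min (pA α k) 1) ^ ((1+α)*β)
        = (2:ℝ)^β * (min (pA α k) 1)^((1+α)*β) := by
      rw [Real.mul_rpow (Real.rpow_nonneg (by norm_num) _) hminp,
        ← Real.rpow_mul (by norm_num : (0:ℝ) ≤ 2), hθs]
    calc (min (pA α ((2:ℝ)•k)) 1) ^ ((1+α)*β) * B
        ≤ ((2:ℝ)^β * (min (pA α k) 1)^((1+α)*β)) * B := by
          rw [← h3]; exact mul_le_mul_of_nonneg_right h2 hB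
      _ = (2:ℝ)^β * ((min (pA α k) 1)^((1+α)*β) * B) := by ring
  have hterm2 : min ((min (pA α ((2:ℝ)•k)) 1) ^ β * A) ((min (pA α ((2:ℝ)•k)) 1) ^ ((1+α)*β) * B)
      ≤ (2:ℝ)^β * min ((min (pA α k) 1) ^ β * A) ((min (pA α k) 1) ^ ((1+α)*β) * B) := by
    rw [mul_min_of_nonneg _ _ (Real.rpow_nonneg (by norm_num : (0:ℝ) ≤ 2) β)]
    exact le_min ((min_le_left _ _).trans hbrA) ((min_le_right _ _).trans hbrB)
  unfold Gfun
  rw [mul_add]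
  exact add_le_add hterm1 hterm2

lemma Gfun_lower (hα : α ∈ Ioo (1:ℝ) 2) (hβ : 0 < β) (hA : 0 ≤ A) (hB : 0 ≤ B)
    (hFA : F ≤ A) (hFB : F ≤ B) (hF : 0 ≤ F) (k : R2d d) (hk : 1 ≤ anorm α k) :
    ((1:ℝ)/2) ^ ((1+α)*β) * F ≤ Gfun α β ((1+α)*β) A B k := by
  obtain ⟨hα1, hα2⟩ := hα
  have hs0 : (0:ℝ) < (1+α)*β := by nlinarith
  have hhalf : (0:ℝ) < 1/2 := by norm_num
  have hss : ((1:ℝ)/2) ^ ((1+α)*β) ≤ ((1:ℝ)/2) ^ β := by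
    apply Real.rpow_le_rpow_of_exponent_ge hhalf (by norm_num)
    nlinarith
  have hmono : ∀ x : ℝ, 1/2 ≤ x → 0 ≤ x → ∀ e : ℝ, 0 < e → ((1:ℝ)/2)^e ≤ (min x 1)^e := by
    intro x hx hx0 e he
    apply Real.rpow_le_rpow hhalf.le (le_min hx (by norm_num)) he.le
  have hterm2nn : (0:ℝ) ≤ min ((min (pA α k) 1) ^ β * A) ((min (pA α k) 1) ^ ((1+α)*β) * B) :=
    le_min (mul_nonneg (Real.rpow_nonneg (le_min (pA_nonneg α k) zero_le_one) _) hA)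
      (mul_nonneg (Real.rpow_nonneg (le_min (pA_nonneg α k) zero_le_one) _) hB)
  have hterm1nn : (0:ℝ) ≤ (min (qA k) 1) ^ β * A :=
    mul_nonneg (Real.rpow_nonneg (le_min (qA_nonneg k) zero_le_one) _) hA
  by_cases hq : (1:ℝ)/2 ≤ qA k
  · have h1 : ((1:ℝ)/2)^β ≤ (min (qA k) 1)^β := hmono _ hq (qA_nonneg k) _ hβ
    have : ((1:ℝ)/2)^((1+α)*β) * F ≤ (min (qA k) 1)^β * A := by
      calc ((1:ℝ)/2)^((1+α)*β) * F ≤ ((1:ℝ)/2)^β * F :=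
            mul_le_mul_of_nonneg_right hss hF
        _ ≤ (min (qA k) 1)^β * A := by
            apply mul_le_mul h1 hFA hF (Real.rpow_nonneg (le_min (qA_nonneg k) zero_le_one) _)
    unfold Gfun
    linarith
  · have hp : (1:ℝ)/2 ≤ pA α k := by
      push_neg at hq
      have : anorm α k = pA α k + qA k := rfl
      linarith
    have h1 : ((1:ℝ)/2)^β ≤ (min (pA α k) 1)^β := hmono _ hp (pA_nonneg α k) _ hβ
    have h2 : ((1:ℝ)/2)^((1+α)*β) ≤ (min (pA α k) 1)^((1+α)*β) := hmono _ hp (pA_nonneg α k) _ hs0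
    have hA' : ((1:ℝ)/2)^((1+α)*β) * F ≤ (min (pA α k) 1)^β * A := by
      calc ((1:ℝ)/2)^((1+α)*β) * F ≤ ((1:ℝ)/2)^β * F := mul_le_mul_of_nonneg_right hss hF
        _ ≤ (min (pA α k) 1)^β * A :=
            mul_le_mul h1 hFA hF (Real.rpow_nonneg (le_min (pA_nonneg α k) zero_le_one) _)
    have hB' : ((1:ℝ)/2)^((1+α)*β) * F ≤ (min (pA α k) 1)^((1+α)*β) * B :=
      mul_le_mul h2 hFB hF (Real.rpow_nonneg (le_min (pA_nonneg α k) zero_le_one) _)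
    unfold Gfun
    have := le_min hA' hB'
    linarith

end G

section Key
variable {d : ℕ}

lemma keyIneq (k : R2d d) (f : R2d d → ℝ) (m : ℕ) (C1 C2 : ℝ) (hC2 : 0 ≤ C2)
    (h1 : ∀ z, |deltaIter (k + k) m f z| ≤ C1)
    (h2 : ∀ z, |deltaIter k (m+1) f z| ≤ C2) :
    ∀ z, (2:ℝ)^m * |deltaIter k m f z| ≤ C1 + (m:ℝ) * 2^m * C2 := by
  intro z
  have hd := deltaIter_double k f m z
  have hsum : (∑ j ∈ Finset.range (m+1), (m.choose j:ℝ)) = 2^m := by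
    rw [← Nat.cast_sum]
    rw [Nat.sum_range_choose]
    push_cast
    ring
  have key : (2:ℝ)^m * deltaIter k m f z - deltaIter (k+k) m f z
      = ∑ j ∈ Finset.range (m+1),
          (m.choose j : ℝ) * (deltaIter k m f z - deltaIter k m f (z + j • k)) := by
    simp only [mul_sub]
    rw [Finset.sum_sub_distrib, ← Finset.sum_mul, hsum, hd]
  have hterm : ∀ j ∈ Finset.range (m+1),
      |(m.choose j : ℝ) * (deltaIter k m f z - deltaIter k m f (z + j • k))|
        ≤ (m.choose j : ℝ) * ((m:ℝ) * C2) := by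
    intro j hj
    rw [abs_mul, abs_of_nonneg (by positivity : (0:ℝ) ≤ (m.choose j : ℝ))]
    apply mul_le_mul_of_nonneg_left _ (by positivity)
    rw [abs_sub_comm]
    have htel := telescope_sum (deltaIter k m f) k j z
    have heq : ∀ i : ℕ, deltaIter k m f (z + i • k + k) - deltaIter k m f (z + i • k)
        = deltaIter k (m+1) f (z + i • k) := fun i => rfl
    rw [htel]
    calc |∑ i ∈ Finset.range j, (deltaIter k m f (z + i • k + k) - deltaIter k m f (z + i • k))|
        ≤ ∑ i ∈ Finset.range j, |deltaIter k m f (z + i • k + k) - deltaIter k m f (z + i • k)| :=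
          Finset.abs_sum_le_sum_abs _ _
      _ ≤ ∑ _i ∈ Finset.range j, C2 := by
          apply Finset.sum_le_sum
          intro i _
          rw [heq i]
          exact h2 _
      _ = (j:ℝ) * C2 := by rw [Finset.sum_const, Finset.card_range]; push_cast; ring
      _ ≤ (m:ℝ) * C2 := by
          have : (j:ℝ) ≤ (m:ℝ) := by
            have := Finset.mem_range.mp hj
            exact_mod_cast Nat.lt_succ_iff.mp this
          exact mul_le_mul_of_nonneg_right this hC2
  calc (2:ℝ)^m * |deltaIter k m f z| = |(2:ℝ)^m * deltaIter k m f z| := by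
        rw [abs_mul, abs_of_nonneg (by positivity : (0:ℝ) ≤ (2:ℝ)^m)]
    _ ≤ |deltaIter (k+k) m f z|
        + |∑ j ∈ Finset.range (m+1),
            (m.choose j : ℝ) * (deltaIter k m f z - deltaIter k m f (z + j • k))| := by
        rw [show (2:ℝ)^m * deltaIter k m f z = deltaIter (k+k) m f z
            + ((2:ℝ)^m * deltaIter k m f z - deltaIter (k+k) m f z) from by ring, key]
        exact abs_add_le _ _
    _ ≤ C1 + (m:ℝ) * 2^m * C2 := by
        apply add_le_add (h1 z)
        calc |∑ j ∈ Finset.range (m+1),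
              (m.choose j : ℝ) * (deltaIter k m f z - deltaIter k m f (z + j • k))|
            ≤ ∑ j ∈ Finset.range (m+1),
              |(m.choose j : ℝ) * (deltaIter k m f z - deltaIter k m f (z + j • k))| :=
              Finset.abs_sum_le_sum_abs _ _
          _ ≤ ∑ j ∈ Finset.range (m+1), (m.choose j : ℝ) * ((m:ℝ) * C2) :=
              Finset.sum_le_sum hterm
          _ = (m:ℝ) * 2^m * C2 := by rw [← Finset.sum_mul, hsum]; ring

lemma anorm_pow_smul_ge {α : ℝ} (hα : α ∈ Set.Ioo (1:ℝ) 2) (n : ℕ) (k : R2d d) :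
    (2:ℝ)^((1/(1+α)) * n) * anorm α k ≤ anorm α ((2^n : ℝ) • k) := by
  obtain ⟨hα1, _⟩ := hα
  have hθpos : 0 < 1/(1+α) := by positivity
  have hθle : 1/(1+α) ≤ 1 := by rw [div_le_one (by linarith)]; linarith
  have h2n : (0:ℝ) ≤ (2:ℝ)^n := by positivity
  have hp : pA α ((2^n : ℝ) • k) = (2:ℝ)^((1/(1+α)) * n) * pA α k := by
    unfold pA
    rw [Prod.smul_fst, norm_smul, Real.norm_of_nonneg h2n,
      Real.mul_rpow h2n (norm_nonneg _), ← Real.rpow_natCast (2:ℝ) n,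
      ← Real.rpow_mul (by norm_num : (0:ℝ) ≤ 2), mul_comm (n:ℝ) (1/(1+α))]
  have hq : qA ((2^n : ℝ) • k) = (2:ℝ)^(n:ℝ) * qA k := by
    unfold qA
    rw [Prod.smul_snd, norm_smul, Real.norm_of_nonneg h2n, Real.rpow_natCast]
  have hle : (2:ℝ)^((1/(1+α)) * n) ≤ (2:ℝ)^(n:ℝ) := by
    apply Real.rpow_le_rpow_of_exponent_le one_le_two
    nlinarith [Nat.cast_nonneg (α := ℝ) n]
  show (2:ℝ)^((1/(1+α)) * n) * (pA α k + qA k) ≤ pA α ((2^n : ℝ) • k) + qA ((2^n : ℝ) • k)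
  rw [hp, hq, mul_add]
  apply add_le_add le_rfl
  exact mul_le_mul_of_nonneg_right hle (qA_nonneg k)

lemma exists_anorm_big {α : ℝ} (hα : α ∈ Set.Ioo (1:ℝ) 2) (k : R2d d) (hk : k ≠ 0) :
    ∃ n : ℕ, 1 ≤ anorm α ((2^n : ℝ) • k) := by
  obtain ⟨hα1, hα2⟩ := hα
  have hθpos : 0 < 1/(1+α) := by positivity
  have hpos := anorm_pos ⟨hα1, hα2⟩ k hk
  have h1 : (1:ℝ) < (2:ℝ)^(1/(1+α)) := Real.one_lt_rpow_iff_of_pos (by norm_num) |>.mpr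
    (Or.inl ⟨by norm_num, hθpos⟩)
  obtain ⟨n, hn⟩ := pow_unbounded_of_one_lt (1 / anorm α k) h1
  refine ⟨n, ?_⟩
  have hgrow := anorm_pow_smul_ge ⟨hα1, hα2⟩ n k
  have hpow : ((2:ℝ)^(1/(1+α)))^n = (2:ℝ)^((1/(1+α)) * n) := by
    rw [← Real.rpow_natCast ((2:ℝ)^(1/(1+α))) n, ← Real.rpow_mul (by norm_num : (0:ℝ) ≤ 2)]
  rw [hpow] at hn
  have : 1 < (2:ℝ)^((1/(1+α)) * n) * anorm α k := by
    rw [div_lt_iff₀ hpos] at hn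
    linarith
  linarith
end Key

section Step
variable {d : ℕ} {α β : ℝ}

lemma stepLemma (hα : α ∈ Set.Ioo (1:ℝ) 2) (hβ : 0 < β) (m : ℕ) (hm : β < (m:ℝ)) :
    ∃ C : ℝ, 1 ≤ C ∧ ∀ (f : R2d d → ℝ) (A B F : ℝ), 0 ≤ A → 0 ≤ B → 0 ≤ F → F ≤ A → F ≤ B →
      (∀ z, |f z| ≤ F) →
      (∀ k : R2d d, k ≠ 0 → ∀ z, |deltaIter k (m+1) f z| ≤ Gfun α β ((1+α)*β) A B k) →
      ∀ k : R2d d, k ≠ 0 → ∀ z, |deltaIter k m f z| ≤ C * Gfun α β ((1+α)*β) A B k := by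
  obtain ⟨hα1, hα2⟩ := hα
  have hs'0 : (0:ℝ) < (1+α)*β := by nlinarith
  have h2m : (0:ℝ) < (2:ℝ)^m := by positivity
  have h2s : (0:ℝ) < (2:ℝ)^((1+α)*β) := Real.rpow_pos_of_pos (by norm_num) _
  have h2β : (2:ℝ)^β < (2:ℝ)^m := by
    calc (2:ℝ)^β < (2:ℝ)^(m:ℝ) := Real.rpow_lt_rpow_of_exponent_lt one_lt_two hm
      _ = (2:ℝ)^m := Real.rpow_natCast 2 m
  have hgap : (0:ℝ) < (2:ℝ)^m - (2:ℝ)^β := by linarith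
  set C : ℝ := (2:ℝ)^m * (2:ℝ)^((1+α)*β) + (m:ℝ) * (2:ℝ)^m / ((2:ℝ)^m - (2:ℝ)^β) with hC
  have h2m1 : (1:ℝ) ≤ (2:ℝ)^m := by
    have := one_le_two_rpow (Nat.cast_nonneg (α := ℝ) m)
    rwa [Real.rpow_natCast] at this
  have hC1 : 1 ≤ C := by
    have h2 : (1:ℝ) ≤ (2:ℝ)^((1+α)*β) := one_le_two_rpow hs'0.le
    have h3 : (0:ℝ) ≤ (m:ℝ) * (2:ℝ)^m / ((2:ℝ)^m - (2:ℝ)^β) := by positivity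
    have h12 : (1:ℝ) ≤ (2:ℝ)^m * (2:ℝ)^((1+α)*β) := by nlinarith
    rw [hC]
    linarith
  have harith : C * (2:ℝ)^β + (m:ℝ) * (2:ℝ)^m ≤ (2:ℝ)^m * C := by
    have hd : (m:ℝ) * (2:ℝ)^m / ((2:ℝ)^m - (2:ℝ)^β) * ((2:ℝ)^m - (2:ℝ)^β)
        = (m:ℝ) * (2:ℝ)^m := div_mul_cancel₀ _ (ne_of_gt hgap)
    have hexp : C * ((2:ℝ)^m - (2:ℝ)^β)
        = (2:ℝ)^m * (2:ℝ)^((1+α)*β) * ((2:ℝ)^m - (2:ℝ)^β) + (m:ℝ) * (2:ℝ)^m := by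
      rw [hC, add_mul, hd]
    nlinarith [hexp, mul_nonneg (mul_nonneg h2m.le h2s.le) hgap.le]
  refine ⟨C, hC1, ?_⟩
  intro f A B F hA hB hF hFA hFB hf hnext
  have hGnn : ∀ k : R2d d, 0 ≤ Gfun α β ((1+α)*β) A B k :=
    fun k => Gfun_nonneg hA hB hβ.le hs'0.le k
  have base : ∀ k : R2d d, 1 ≤ anorm α k → ∀ z,
      |deltaIter k m f z| ≤ C * Gfun α β ((1+α)*β) A B k := by
    intro k hk1 z
    have h0 : ∀ w, |deltaIter k 0 f w| ≤ F := hf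
    have h1 := deltaIter_le_of_le k f F 0 h0 m z
    rw [show (0+m) = m from Nat.zero_add m] at h1
    have hlow := Gfun_lower ⟨hα1, hα2⟩ hβ hA hB hFA hFB hF k hk1
    have hinv : ((1:ℝ)/2)^((1+α)*β) = ((2:ℝ)^((1+α)*β))⁻¹ := by
      rw [one_div, Real.inv_rpow (by norm_num : (0:ℝ) ≤ 2)]
    rw [hinv] at hlow
    have hFle : F ≤ (2:ℝ)^((1+α)*β) * Gfun α β ((1+α)*β) A B k := by
      rw [inv_mul_le_iff₀ h2s] at hlow
      exact hlow
    calc |deltaIter k m f z| ≤ 2^m * F := h1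
      _ ≤ 2^m * ((2:ℝ)^((1+α)*β) * Gfun α β ((1+α)*β) A B k) :=
          mul_le_mul_of_nonneg_left hFle h2m.le
      _ ≤ C * Gfun α β ((1+α)*β) A B k := by
          have h3 : (0:ℝ) ≤ (m:ℝ) * (2:ℝ)^m / ((2:ℝ)^m - (2:ℝ)^β) := by positivity
          have hG := hGnn k
          rw [hC]
          nlinarith [mul_nonneg h3 hG]
  have main : ∀ n : ℕ, ∀ k : R2d d, k ≠ 0 → 1 ≤ anorm α ((2^n : ℝ) • k) → ∀ z,
      |deltaIter k m f z| ≤ C * Gfun α β ((1+α)*β) A B k := by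
    intro n
    induction n with
    | zero =>
      intro k _ hk1 z
      rw [pow_zero, one_smul] at hk1
      exact base k hk1 z
    | succ n ih =>
      intro k hk hkn z
      by_cases h1 : 1 ≤ anorm α k
      · exact base k h1 z
      · have hk2 : ((2:ℝ)•k) ≠ 0 := smul_ne_zero two_ne_zero hk
        have hIH : ∀ w, |deltaIter ((2:ℝ)•k) m f w| ≤ C * Gfun α β ((1+α)*β) A B ((2:ℝ)•k) := by
          apply ih ((2:ℝ)•k) hk2
          rw [smul_smul, ← pow_succ]
          exact hkn
        have hkk : ∀ w, |deltaIter (k+k) m f w| ≤ C * Gfun α β ((1+α)*β) A B ((2:ℝ)•k) := by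
          intro w
          have := hIH w
          rw [two_smul ℝ k] at this
          have hGeq : Gfun α β ((1+α)*β) A B ((2:ℝ)•k) = Gfun α β ((1+α)*β) A B (k+k) := by
            rw [two_smul ℝ k]
          rw [← hGeq] at this
          exact this
        have hnx : ∀ w, |deltaIter k (m+1) f w| ≤ Gfun α β ((1+α)*β) A B k := hnext k hk
        have hkey := keyIneq k f m (C * Gfun α β ((1+α)*β) A B ((2:ℝ)•k))
          (Gfun α β ((1+α)*β) A B k) (hGnn k) hkk hnx z
        have hGd : Gfun α β ((1+α)*β) A B ((2:ℝ)•k) ≤ (2:ℝ)^β * Gfun α β ((1+α)*β) A B k :=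
          Gfun_double ⟨hα1, hα2⟩ hβ hA hB k
        have h6 : (2:ℝ)^m * |deltaIter k m f z|
            ≤ C * ((2:ℝ)^β * Gfun α β ((1+α)*β) A B k)
              + (m:ℝ) * 2^m * Gfun α β ((1+α)*β) A B k := by
          calc (2:ℝ)^m * |deltaIter k m f z|
              ≤ C * Gfun α β ((1+α)*β) A B ((2:ℝ)•k)
                + (m:ℝ) * 2^m * Gfun α β ((1+α)*β) A B k := hkey
            _ ≤ _ := by
                refine add_le_add ?_ le_rfl
                apply mul_le_mul_of_nonneg_left hGd (by linarith)
        have h7 : (2:ℝ)^m * |deltaIter k m f z| ≤ (2:ℝ)^m * (C * Gfun α β ((1+α)*β) A B k) := by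
          nlinarith [mul_le_mul_of_nonneg_right harith (hGnn k)]
        exact le_of_mul_le_mul_left h7 h2m
  intro k hk z
  obtain ⟨n, hn⟩ := exists_anorm_big ⟨hα1, hα2⟩ k hk
  exact main n k hk hn z
end Step

section Chain
variable {d : ℕ} {α β : ℝ}

lemma chainLemma (hα : α ∈ Set.Ioo (1:ℝ) 2) (hβ : 0 < β) :
    ∃ C : ℝ, 1 ≤ C ∧ ∀ (f : R2d d → ℝ) (A B F : ℝ), 0 ≤ A → 0 ≤ B → 0 ≤ F → F ≤ A → F ≤ B →
      (∀ z, |f z| ≤ F) →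
      (∀ k : R2d d, k ≠ 0 → ∀ z,
        |deltaIter k (⌊(1+α)*β⌋₊ + 1) f z| ≤ Gfun α β ((1+α)*β) A B k) →
      ∀ k : R2d d, k ≠ 0 → ∀ z,
        |deltaIter k (⌊β⌋₊ + 1) f z| ≤ C * Gfun α β ((1+α)*β) A B k := by
  obtain ⟨hα1, hα2⟩ := hα
  set N := ⌊(1+α)*β⌋₊ with hN
  set M := ⌊β⌋₊ with hM
  have hMN : M ≤ N := by
    apply Nat.floor_le_floor
    nlinarith
  have hβM : β < (M:ℝ) + 1 := Nat.lt_floor_add_one β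
  have aux : ∀ i : ℕ, i ≤ N - M → ∃ C : ℝ, 1 ≤ C ∧
      ∀ (f : R2d d → ℝ) (A B F : ℝ), 0 ≤ A → 0 ≤ B → 0 ≤ F → F ≤ A → F ≤ B →
      (∀ z, |f z| ≤ F) →
      (∀ k : R2d d, k ≠ 0 → ∀ z,
        |deltaIter k (N + 1) f z| ≤ Gfun α β ((1+α)*β) A B k) →
      ∀ k : R2d d, k ≠ 0 → ∀ z,
        |deltaIter k (N + 1 - i) f z| ≤ C * Gfun α β ((1+α)*β) A B k := by
    intro i
    induction i with
    | zero =>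
      intro _
      refine ⟨1, le_refl 1, ?_⟩
      intro f A B F hA hB hF hFA hFB hf hbase k hk z
      rw [Nat.sub_zero, one_mul]
      exact hbase k hk z
    | succ i ih =>
      intro hi1
      obtain ⟨Ci, hCi1, hCi⟩ := ih (by omega)
      have hm : β < ((N - i : ℕ) : ℝ) := by
        have h1 : M + 1 ≤ N - i := by omega
        have h2 : ((M:ℝ)) + 1 ≤ ((N - i : ℕ) : ℝ) := by exact_mod_cast h1
        linarith
      obtain ⟨Cs, hCs1, hCs⟩ := stepLemma (d := d) ⟨hα1, hα2⟩ hβ (N - i) hm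
      refine ⟨Cs * Ci, ?_, ?_⟩
      · nlinarith
      intro f A B F hA hB hF hFA hFB hf hbase k hk z
      have hCi0 : (0:ℝ) ≤ Ci := by linarith
      have hnext : ∀ k' : R2d d, k' ≠ 0 → ∀ w,
          |deltaIter k' ((N - i) + 1) f w| ≤ Gfun α β ((1+α)*β) (Ci*A) (Ci*B) k' := by
        intro k' hk' w
        have h0 := hCi f A B F hA hB hF hFA hFB hf hbase k' hk' w
        have hidx : N + 1 - i = (N - i) + 1 := by omega
        rw [hidx] at h0
        rw [Gfun_smul Ci k' hCi0]
        exact h0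
      have hres := hCs f (Ci*A) (Ci*B) F (mul_nonneg hCi0 hA) (mul_nonneg hCi0 hB) hF
        (by nlinarith) (by nlinarith) hf hnext k hk z
      rw [Gfun_smul Ci k hCi0] at hres
      have hidx2 : N + 1 - (i+1) = N - i := by omega
      rw [hidx2]
      calc |deltaIter k (N - i) f z| ≤ Cs * (Ci * Gfun α β ((1+α)*β) A B k) := hres
        _ = Cs * Ci * Gfun α β ((1+α)*β) A B k := by ring
  obtain ⟨C, hC1, hCmain⟩ := aux (N - M) (le_refl _)
  refine ⟨C, hC1, ?_⟩
  have hidx : N + 1 - (N - M) = M + 1 := by omega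
  rw [hidx] at hCmain
  exact hCmain
end Chain

section Base
variable {d : ℕ} {α β : ℝ}

lemma baseG (hα : α ∈ Set.Ioo (1:ℝ) 2) (hβ : 0 < β) (f : R2d d → ℝ) (Sa Sb : ℝ) (m : ℕ)
    (hSa : 0 ≤ Sa) (hSb : 0 ≤ Sb)
    (hfa : ∀ k : R2d d, k ≠ 0 → ∀ z, |deltaIter k m f z| ≤ (min (anorm α k) 1)^β * Sa)
    (hfb : ∀ k : R2d d, k ≠ 0 → ∀ z,
      |deltaIter k m f z| ≤ (min (anorm α k) 1)^((1+α)*β) * Sb) :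
    ∀ k : R2d d, k ≠ 0 → ∀ z, |deltaIter k m f z|
      ≤ Gfun α β ((1+α)*β) ((2:ℝ)^((1+α)*β) * Sa) ((2:ℝ)^((1+α)*β) * Sb) k := by
  obtain ⟨hα1, hα2⟩ := hα
  have hs'0 : (0:ℝ) < (1+α)*β := by nlinarith
  have hββs : β ≤ (1+α)*β := by nlinarith
  intro k hk z
  have hp0 := pA_nonneg α k
  have hq0 := qA_nonneg k
  have hminq : (0:ℝ) ≤ min (qA k) 1 := le_min hq0 zero_le_one
  have hminp : (0:ℝ) ≤ min (pA α k) 1 := le_min hp0 zero_le_one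
  have hman : (0:ℝ) ≤ min (anorm α k) 1 := le_min (anorm_nonneg α k) zero_le_one
  have h2β : (2:ℝ)^β ≤ (2:ℝ)^((1+α)*β) :=
    Real.rpow_le_rpow_of_exponent_le one_le_two hββs
  have hkey : ∀ (x : ℝ), 0 ≤ x → min (anorm α k) 1 ≤ 2 * min x 1 →
      ∀ e Sc : ℝ, 0 < e → e ≤ (1+α)*β → 0 ≤ Sc →
      (min (anorm α k) 1)^e * Sc ≤ (min x 1)^e * ((2:ℝ)^((1+α)*β) * Sc) := by
    intro x hx hle e Sc he hes hSc
    have hminx : (0:ℝ) ≤ min x 1 := le_min hx zero_le_one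
    have h1 : (min (anorm α k) 1)^e ≤ (2 * min x 1)^e :=
      Real.rpow_le_rpow hman hle he.le
    have h2 : (2 * min x 1)^e = (2:ℝ)^e * (min x 1)^e := Real.mul_rpow (by norm_num) hminx
    have h3 : (2:ℝ)^e ≤ (2:ℝ)^((1+α)*β) := Real.rpow_le_rpow_of_exponent_le one_le_two hes
    calc (min (anorm α k) 1)^e * Sc ≤ ((2:ℝ)^e * (min x 1)^e) * Sc := by
          rw [← h2]; exact mul_le_mul_of_nonneg_right h1 hSc
      _ ≤ ((2:ℝ)^((1+α)*β) * (min x 1)^e) * Sc := by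
          apply mul_le_mul_of_nonneg_right _ hSc
          exact mul_le_mul_of_nonneg_right h3 (Real.rpow_nonneg hminx _)
      _ = (min x 1)^e * ((2:ℝ)^((1+α)*β) * Sc) := by ring
  have hterm2nn : (0:ℝ) ≤ min ((min (pA α k) 1) ^ β * ((2:ℝ)^((1+α)*β) * Sa))
      ((min (pA α k) 1) ^ ((1+α)*β) * ((2:ℝ)^((1+α)*β) * Sb)) := by
    apply le_min
    · exact mul_nonneg (Real.rpow_nonneg hminp _) (by positivity)
    · exact mul_nonneg (Real.rpow_nonneg hminp _) (by positivity)
  have hterm1nn : (0:ℝ) ≤ (min (qA k) 1) ^ β * ((2:ℝ)^((1+α)*β) * Sa) :=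
    mul_nonneg (Real.rpow_nonneg hminq _) (by positivity)
  rcases le_total (pA α k) (qA k) with hpq | hpq
  · -- q dominates: use first term of G
    have hle : min (anorm α k) 1 ≤ 2 * min (qA k) 1 := by
      have h1 : anorm α k ≤ 2 * qA k := by
        show pA α k + qA k ≤ 2 * qA k
        linarith
      calc min (anorm α k) 1 ≤ min (2 * qA k) 1 := min_le_min h1 le_rfl
        _ ≤ 2 * min (qA k) 1 := min_scale_le one_le_two hq0
    have := (hfa k hk z).trans (hkey (qA k) hq0 hle β Sa hβ hββs hSa)
    unfold Gfun
    linarith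
  · -- p dominates: use second term of G
    have hle : min (anorm α k) 1 ≤ 2 * min (pA α k) 1 := by
      have h1 : anorm α k ≤ 2 * pA α k := by
        show pA α k + qA k ≤ 2 * pA α k
        linarith
      calc min (anorm α k) 1 ≤ min (2 * pA α k) 1 := min_le_min h1 le_rfl
        _ ≤ 2 * min (pA α k) 1 := min_scale_le one_le_two hp0
    have hA' := (hfa k hk z).trans (hkey (pA α k) hp0 hle β Sa hβ hββs hSa)
    have hB' := (hfb k hk z).trans (hkey (pA α k) hp0 hle ((1+α)*β) Sb hs'0 le_rfl hSb)
    have := le_min hA' hB'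
    unfold Gfun
    linarith
end Base

section Transport
variable {d : ℕ} {α β : ℝ}

lemma Gfun_transport_bound (hα : α ∈ Set.Ioo (1:ℝ) 2) (hβ : 0 < β)
    (t RA RB : ℝ) (ht0 : 0 ≤ t) (hRA0 : 0 ≤ RA) (hRB0 : 0 ≤ RB) (h : R2d d) :
    Gfun α β ((1+α)*β) RA RB (Gam t h)
      ≤ (1+(4:ℝ)^β)*(anorm α h^β*RA)
        + (4:ℝ)^((1+α)*β)*(t^β*(anorm α h^β*RB)) := by
  obtain ⟨hα1, hα2⟩ := hα
  have hs'0 : (0:ℝ) < (1+α)*β := by nlinarith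
  have hθpos : (0:ℝ) < 1/(1+α) := by positivity
  have hθle : 1/(1+α) ≤ 1 := by rw [div_le_one (by linarith)]; linarith
  have hθs : (1/(1+α)) * ((1+α)*β) = β := by field_simp
  have h4β : (0:ℝ) < (4:ℝ)^β := Real.rpow_pos_of_pos (by norm_num) _
  have h4s : (0:ℝ) < (4:ℝ)^((1+α)*β) := Real.rpow_pos_of_pos (by norm_num) _
  have htβ0 : (0:ℝ) ≤ t^β := Real.rpow_nonneg ht0 β
  have hanonneg := anorm_nonneg α h
  have haβ0 : (0:ℝ) ≤ anorm α h ^ β := Real.rpow_nonneg hanonneg β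
  have hva : qA h ≤ anorm α h := by
    have h1 : anorm α h = pA α h + qA h := rfl
    have := pA_nonneg α h
    linarith
  have hv0 : 0 ≤ qA h := qA_nonneg h
  have hq' : qA (Gam t h) = qA h := rfl
  have hw0 : (0:ℝ) ≤ (t*qA h)^(1/(1+α)) := Real.rpow_nonneg (mul_nonneg ht0 hv0) _
  have hp' : pA α (Gam t h) ≤ 2*anorm α h + 2*(t*qA h)^(1/(1+α)) := by
    have h1 : ‖(Gam t h).1‖ ≤ ‖h.1‖ + t*qA h := by
      show ‖h.1 + t • h.2‖ ≤ _
      calc ‖h.1 + t•h.2‖ ≤ ‖h.1‖ + ‖t•h.2‖ := norm_add_le _ _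
        _ = ‖h.1‖ + t*qA h := by rw [norm_smul, Real.norm_of_nonneg ht0]; rfl
    have h2 : pA α (Gam t h) ≤ (‖h.1‖ + t*qA h)^(1/(1+α)) :=
      Real.rpow_le_rpow (norm_nonneg _) h1 hθpos.le
    have h2θ : (2:ℝ)^(1/(1+α)) ≤ 2 := by
      have := Real.rpow_le_rpow_of_exponent_le (one_le_two (α := ℝ)) hθle
      rwa [Real.rpow_one] at this
    have h4 : ‖h.1‖^(1/(1+α)) ≤ anorm α h := by
      have h5 : anorm α h = pA α h + qA h := rfl
      have h6 : pA α h = ‖h.1‖^(1/(1+α)) := rfl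
      linarith
    have h3 : (‖h.1‖ + t*qA h)^(1/(1+α))
        ≤ 2*(‖h.1‖^(1/(1+α))) + 2*((t*qA h)^(1/(1+α))) := by
      rcases le_total ‖h.1‖ (t*qA h) with hc | hc
      · have e1 : (‖h.1‖ + t*qA h)^(1/(1+α)) ≤ (2*(t*qA h))^(1/(1+α)) := by
          apply Real.rpow_le_rpow (by positivity) (by linarith) hθpos.le
        have e2 : (2*(t*qA h))^(1/(1+α))
            = (2:ℝ)^(1/(1+α)) * (t*qA h)^(1/(1+α)) :=
          Real.mul_rpow (by norm_num) (mul_nonneg ht0 hv0)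
        have e3 : (2:ℝ)^(1/(1+α)) * (t*qA h)^(1/(1+α)) ≤ 2*((t*qA h)^(1/(1+α))) :=
          mul_le_mul_of_nonneg_right h2θ hw0
        have e4 : (0:ℝ) ≤ 2*(‖h.1‖^(1/(1+α))) := by positivity
        linarith
      · have e1 : (‖h.1‖ + t*qA h)^(1/(1+α)) ≤ (2*‖h.1‖)^(1/(1+α)) := by
          apply Real.rpow_le_rpow (by positivity) (by linarith) hθpos.le
        have e2 : (2*‖h.1‖)^(1/(1+α)) = (2:ℝ)^(1/(1+α)) * ‖h.1‖^(1/(1+α)) :=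
          Real.mul_rpow (by norm_num) (norm_nonneg _)
        have e3 : (2:ℝ)^(1/(1+α)) * ‖h.1‖^(1/(1+α)) ≤ 2*(‖h.1‖^(1/(1+α))) :=
          mul_le_mul_of_nonneg_right h2θ (Real.rpow_nonneg (norm_nonneg _) _)
        have e4 : (0:ℝ) ≤ 2*((t*qA h)^(1/(1+α))) := by positivity
        linarith
    linarith
  have ht1 : (min (qA (Gam t h)) 1)^β * RA ≤ anorm α h^β * RA := by
    have hm : min (qA (Gam t h)) 1 ≤ anorm α h := by
      rw [hq']
      exact (min_le_left _ _).trans hva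
    exact mul_le_mul_of_nonneg_right
      (Real.rpow_le_rpow (le_min (qA_nonneg _) zero_le_one) hm hβ.le) hRA0
  have hX0 : (0:ℝ) ≤ min (pA α (Gam t h)) 1 := le_min (pA_nonneg _ _) zero_le_one
  have hu0 : (0:ℝ) ≤ min ((t*qA h)^(1/(1+α))) 1 := le_min hw0 zero_le_one
  have hXb : min (pA α (Gam t h)) 1 ≤ 2*anorm α h + 2*min ((t*qA h)^(1/(1+α))) 1 := by
    rcases le_total ((t*qA h)^(1/(1+α))) 1 with hw1 | hw1
    · rw [min_eq_left hw1]
      exact (min_le_left _ _).trans hp'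
    · rw [min_eq_right hw1]
      have h9 : min (pA α (Gam t h)) 1 ≤ 1 := min_le_right _ _
      linarith
  have hterm2 : min ((min (pA α (Gam t h)) 1)^β * RA)
        ((min (pA α (Gam t h)) 1)^((1+α)*β) * RB)
      ≤ (4:ℝ)^β*(anorm α h^β*RA) + (4:ℝ)^((1+α)*β)*(t^β*(anorm α h^β*RB)) := by
    have hpad1 : (0:ℝ) ≤ (4:ℝ)^β*(anorm α h^β*RA) :=
      mul_nonneg h4β.le (mul_nonneg haβ0 hRA0)
    have hpad2 : (0:ℝ) ≤ (4:ℝ)^((1+α)*β)*(t^β*(anorm α h^β*RB)) :=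
      mul_nonneg h4s.le (mul_nonneg htβ0 (mul_nonneg haβ0 hRB0))
    rcases le_total (min ((t*qA h)^(1/(1+α))) 1) (anorm α h) with hc | hc
    · have h1 : min (pA α (Gam t h)) 1 ≤ 4*anorm α h := by linarith
      have h2 : (min (pA α (Gam t h)) 1)^β ≤ (4*anorm α h)^β :=
        Real.rpow_le_rpow hX0 h1 hβ.le
      have h3 : (4*anorm α h)^β = (4:ℝ)^β*anorm α h^β :=
        Real.mul_rpow (by norm_num) hanonneg
      calc min ((min (pA α (Gam t h)) 1)^β * RA)
            ((min (pA α (Gam t h)) 1)^((1+α)*β) * RB)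
          ≤ (min (pA α (Gam t h)) 1)^β * RA := min_le_left _ _
        _ ≤ ((4:ℝ)^β*anorm α h^β) * RA := by
            rw [← h3]; exact mul_le_mul_of_nonneg_right h2 hRA0
        _ = (4:ℝ)^β*(anorm α h^β*RA) := by ring
        _ ≤ _ := le_add_of_nonneg_right hpad2
    · have h1 : min (pA α (Gam t h)) 1 ≤ 4*min ((t*qA h)^(1/(1+α))) 1 := by linarith
      have h2 : (min (pA α (Gam t h)) 1)^((1+α)*β)
          ≤ (4*min ((t*qA h)^(1/(1+α))) 1)^((1+α)*β) :=
        Real.rpow_le_rpow hX0 h1 hs'0.le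
      have h3 : (4*min ((t*qA h)^(1/(1+α))) 1)^((1+α)*β)
          = (4:ℝ)^((1+α)*β)*(min ((t*qA h)^(1/(1+α))) 1)^((1+α)*β) :=
        Real.mul_rpow (by norm_num) hu0
      have h4 : (min ((t*qA h)^(1/(1+α))) 1)^((1+α)*β) ≤ ((t*qA h)^(1/(1+α)))^((1+α)*β) :=
        Real.rpow_le_rpow hu0 (min_le_left _ _) hs'0.le
      have h5 : ((t*qA h)^(1/(1+α)))^((1+α)*β) = (t*qA h)^β := by
        rw [← Real.rpow_mul (mul_nonneg ht0 hv0), hθs]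
      have h6 : (t*qA h)^β = t^β * (qA h)^β := Real.mul_rpow ht0 hv0
      have h7 : (qA h)^β ≤ anorm α h^β := Real.rpow_le_rpow hv0 hva hβ.le
      have h8 : t^β * (qA h)^β ≤ t^β * anorm α h^β :=
        mul_le_mul_of_nonneg_left h7 htβ0
      calc min ((min (pA α (Gam t h)) 1)^β * RA)
            ((min (pA α (Gam t h)) 1)^((1+α)*β) * RB)
          ≤ (min (pA α (Gam t h)) 1)^((1+α)*β) * RB := min_le_right _ _
        _ ≤ ((4:ℝ)^((1+α)*β)*(min ((t*qA h)^(1/(1+α))) 1)^((1+α)*β)) * RB := by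
            rw [← h3]; exact mul_le_mul_of_nonneg_right h2 hRB0
        _ ≤ ((4:ℝ)^((1+α)*β)*(t^β * anorm α h^β)) * RB := by
            apply mul_le_mul_of_nonneg_right _ hRB0
            apply mul_le_mul_of_nonneg_left _ h4s.le
            calc (min ((t*qA h)^(1/(1+α))) 1)^((1+α)*β)
                ≤ ((t*qA h)^(1/(1+α)))^((1+α)*β) := h4
              _ = t^β * (qA h)^β := by rw [h5, h6]
              _ ≤ t^β * anorm α h^β := h8
        _ = (4:ℝ)^((1+α)*β)*(t^β*(anorm α h^β*RB)) := by ring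
        _ ≤ _ := le_add_of_nonneg_left hpad1
  show (min (qA (Gam t h)) 1)^β * RA
      + min ((min (pA α (Gam t h)) 1)^β * RA)
          ((min (pA α (Gam t h)) 1)^((1+α)*β) * RB) ≤ _
  have hexp : (1+(4:ℝ)^β)*(anorm α h^β*RA)
      = anorm α h^β*RA + (4:ℝ)^β*(anorm α h^β*RA) := by ring
  linarith

lemma transport_pointwise (hα : α ∈ Set.Ioo (1:ℝ) 2) (hβ : 0 < β)
    (t RA RB Cch : ℝ) (ht0 : 0 ≤ t) (hRA0 : 0 ≤ RA) (hRB0 : 0 ≤ RB) (hCch1 : 1 ≤ Cch)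
    (f : R2d d → ℝ) (F : ℝ) (hF0 : 0 ≤ F) (hFRA : F ≤ RA)
    (hunif : ∀ (k : R2d d) (z : R2d d), |deltaIter k (⌊β⌋₊+1) f z| ≤ 2^(⌊β⌋₊+1) * F)
    (hmainG : ∀ k : R2d d, k ≠ 0 → ∀ z,
      |deltaIter k (⌊β⌋₊+1) f z| ≤ Cch * Gfun α β ((1+α)*β) RA RB k) :
    ∀ h : R2d d, h ≠ 0 → ∀ z : R2d d,
      anorm α h ^ (-β) * |deltaIter h (⌊β⌋₊+1) (fun w => f (Gam t w)) z|
        ≤ (Cch * (1 + (4:ℝ)^β + (4:ℝ)^((1+α)*β)) + (2:ℝ)^(⌊β⌋₊+1)) * (RA + t^β * RB) := by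
  obtain ⟨hα1, hα2⟩ := hα
  have hs'0 : (0:ℝ) < (1+α)*β := by nlinarith
  have h4β : (0:ℝ) < (4:ℝ)^β := Real.rpow_pos_of_pos (by norm_num) _
  have h4s : (0:ℝ) < (4:ℝ)^((1+α)*β) := Real.rpow_pos_of_pos (by norm_num) _
  have h2M : (0:ℝ) < (2:ℝ)^(⌊β⌋₊+1) := by positivity
  have htβ0 : (0:ℝ) ≤ t^β := Real.rpow_nonneg ht0 β
  set C5 : ℝ := Cch * (1 + (4:ℝ)^β + (4:ℝ)^((1+α)*β)) + (2:ℝ)^(⌊β⌋₊+1) with hC5def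
  have hC52M : (2:ℝ)^(⌊β⌋₊+1) ≤ C5 := by
    rw [hC5def]
    have h1 : (0:ℝ) ≤ Cch * (1 + (4:ℝ)^β + (4:ℝ)^((1+α)*β)) :=
      mul_nonneg (by linarith) (by positivity)
    linarith
  have hC5pos : 0 < C5 := lt_of_lt_of_le h2M hC52M
  have hC5A : Cch * (1 + (4:ℝ)^β) ≤ C5 := by
    rw [hC5def]
    have h1 : Cch * (1 + (4:ℝ)^β) ≤ Cch * (1 + (4:ℝ)^β + (4:ℝ)^((1+α)*β)) :=
      mul_le_mul_of_nonneg_left (by linarith) (by linarith)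
    linarith
  have hC5B : Cch * (4:ℝ)^((1+α)*β) ≤ C5 := by
    rw [hC5def]
    have h1 : Cch * (4:ℝ)^((1+α)*β) ≤ Cch * (1 + (4:ℝ)^β + (4:ℝ)^((1+α)*β)) :=
      mul_le_mul_of_nonneg_left (by linarith) (by linarith)
    linarith
  have hW0 : 0 ≤ C5 * (RA + t^β*RB) :=
    mul_nonneg hC5pos.le (add_nonneg hRA0 (mul_nonneg htβ0 hRB0))
  intro h hh z
  have hapos := anorm_pos ⟨hα1,hα2⟩ h hh
  have hanonneg := anorm_nonneg α h
  have haβpos : (0:ℝ) < anorm α h ^ β := Real.rpow_pos_of_pos hapos β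
  have hainv : anorm α h ^ (-β) = (anorm α h ^ β)⁻¹ := Real.rpow_neg hanonneg β
  have hcomp : deltaIter h (⌊β⌋₊+1) (fun w => f (Gam t w)) z
      = deltaIter (Gam t h) (⌊β⌋₊+1) f (Gam t z) := deltaIter_comp_Gam t f h (⌊β⌋₊+1) z
  rcases le_or_gt 1 (anorm α h) with hbig | hsmall
  · have h1 : anorm α h ^ (-β) ≤ 1 :=
      Real.rpow_le_one_of_one_le_of_nonpos hbig (by linarith)
    have h2 : |deltaIter (Gam t h) (⌊β⌋₊+1) f (Gam t z)| ≤ 2^(⌊β⌋₊+1) * F :=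
      hunif (Gam t h) (Gam t z)
    rw [hcomp]
    calc anorm α h ^ (-β) * |deltaIter (Gam t h) (⌊β⌋₊+1) f (Gam t z)|
        ≤ 1 * (2^(⌊β⌋₊+1)*F) := by
          apply mul_le_mul h1 h2 (abs_nonneg _) zero_le_one
      _ = 2^(⌊β⌋₊+1)*F := one_mul _
      _ ≤ C5 * (RA + t^β*RB) := by
          have h3 : (2:ℝ)^(⌊β⌋₊+1)*F ≤ 2^(⌊β⌋₊+1)*RA :=
            mul_le_mul_of_nonneg_left hFRA h2M.le
          have h5 : (2:ℝ)^(⌊β⌋₊+1)*RA ≤ C5*RA := mul_le_mul_of_nonneg_right hC52M hRA0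
          have h6 : 0 ≤ C5 * (t^β*RB) := mul_nonneg hC5pos.le (mul_nonneg htβ0 hRB0)
          have h7 : C5*(RA + t^β*RB) = C5*RA + C5*(t^β*RB) := by ring
          linarith
  · rcases eq_or_ne (Gam t h) 0 with hg0 | hg0
    · rw [hcomp, hg0, deltaIter_zero_iter f ⌊β⌋₊ (Gam t z), abs_zero, mul_zero]
      exact hW0
    · have haβ0 : (0:ℝ) ≤ anorm α h ^ β := haβpos.le
      have hGb := Gfun_transport_bound ⟨hα1,hα2⟩ hβ t RA RB ht0 hRA0 hRB0 h
      have hmain := hmainG (Gam t h) hg0 (Gam t z)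
      have hfinal : |deltaIter (Gam t h) (⌊β⌋₊+1) f (Gam t z)|
          ≤ anorm α h ^ β * (C5 * (RA + t^β*RB)) := by
        have h1 : |deltaIter (Gam t h) (⌊β⌋₊+1) f (Gam t z)|
            ≤ Cch * ((1+(4:ℝ)^β)*(anorm α h^β*RA)
              + (4:ℝ)^((1+α)*β)*(t^β*(anorm α h^β*RB))) :=
          hmain.trans (mul_le_mul_of_nonneg_left hGb (by linarith))
        have h2 : Cch * ((1+(4:ℝ)^β)*(anorm α h^β*RA)
              + (4:ℝ)^((1+α)*β)*(t^β*(anorm α h^β*RB)))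
            = (Cch*(1+(4:ℝ)^β))*(anorm α h^β*RA)
              + (Cch*(4:ℝ)^((1+α)*β))*(t^β*(anorm α h^β*RB)) := by ring
        have h3 : (Cch*(1+(4:ℝ)^β))*(anorm α h^β*RA) ≤ C5*(anorm α h^β*RA) :=
          mul_le_mul_of_nonneg_right hC5A (mul_nonneg haβ0 hRA0)
        have h4 : (Cch*(4:ℝ)^((1+α)*β))*(t^β*(anorm α h^β*RB))
            ≤ C5*(t^β*(anorm α h^β*RB)) :=
          mul_le_mul_of_nonneg_right hC5B (mul_nonneg htβ0 (mul_nonneg haβ0 hRB0))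
        have h5 : anorm α h ^ β * (C5 * (RA + t^β*RB))
            = C5*(anorm α h^β*RA) + C5*(t^β*(anorm α h^β*RB)) := by ring
        linarith
      rw [hcomp, hainv, inv_mul_le_iff₀ haβpos]
      exact hfinal
end Transport

lemma ofReal_le_toReal_aux {x : ℝ} {E : ℝ≥0∞} (hE : E ≠ ⊤) (h : ENNReal.ofReal x ≤ E)
    (hx : 0 ≤ x) : x ≤ E.toReal := by
  have h2 := ENNReal.toReal_mono hE h
  rwa [ENNReal.toReal_ofReal hx] at h2

section Main
variable {d : ℕ}

set_option maxHeartbeats 2000000 in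
theorem transport_main {α β : ℝ} (hα : α ∈ Set.Ioo (1:ℝ) 2) (hβ : 0 < β) :
    ∃ C > (0 : ℝ), ∀ t : ℝ, 0 ≤ t →
      ∀ f : R2d d → ℝ,
        (⨆ z, (‖f z‖₊ : ℝ≥0∞)) ≠ ⊤ →
        (⨆ (h : R2d d) (_ : h ≠ 0) (z : R2d d),
          ENNReal.ofReal (anorm α h ^ (-((1+α)*β)) * ‖deltaIter h (⌊(1+α)*β⌋₊ + 1) f z‖)) ≠ ⊤ →
        ((⨆ z, (‖f (Gam t z)‖₊ : ℝ≥0∞)) +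
          ⨆ (h : R2d d) (_ : h ≠ 0) (z : R2d d),
            ENNReal.ofReal (anorm α h ^ (-β) * ‖deltaIter h (⌊β⌋₊ + 1) (fun w => f (Gam t w)) z‖))
          ≤ ENNReal.ofReal
            (C * (((⨆ z, (‖f z‖₊ : ℝ≥0∞)) +
                ⨆ (h : R2d d) (_ : h ≠ 0) (z : R2d d),
                  ENNReal.ofReal (anorm α h ^ (-β) * ‖deltaIter h (⌊β⌋₊ + 1) f z‖)).toReal
              + t ^ β * ((⨆ z, (‖f z‖₊ : ℝ≥0∞)) +
                ⨆ (h : R2d d) (_ : h ≠ 0) (z : R2d d),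
                  ENNReal.ofReal (anorm α h ^ (-((1+α)*β))
                    * ‖deltaIter h (⌊(1+α)*β⌋₊ + 1) f z‖)).toReal)) := by
  obtain ⟨hα1, hα2⟩ := hα
  have hs'0 : (0:ℝ) < (1+α)*β := by nlinarith
  have hββs : β ≤ (1+α)*β := by nlinarith
  have hθpos : (0:ℝ) < 1/(1+α) := by positivity
  have hθle : 1/(1+α) ≤ 1 := by rw [div_le_one (by linarith)]; linarith
  have hθs : (1/(1+α)) * ((1+α)*β) = β := by field_simp
  have hNM : ⌊β⌋₊ ≤ ⌊(1+α)*β⌋₊ := Nat.floor_le_floor hββs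
  obtain ⟨Cch, hCch1, hchain⟩ := chainLemma (d := d) ⟨hα1,hα2⟩ hβ
  set N := ⌊(1+α)*β⌋₊ with hNdef
  set M := ⌊β⌋₊ with hMdef
  have hβM : β < (M:ℝ) + 1 := Nat.lt_floor_add_one β
  set K1 : ℝ := 2^(N+1) with hK1def
  set K2 : ℝ := (2:ℝ)^((1+α)*β) with hK2def
  have hK1one : (1:ℝ) ≤ K1 := by
    have := pow_le_pow_left₀ (by norm_num : (0:ℝ) ≤ 1) (by norm_num : (1:ℝ) ≤ 2) (N+1)
    simpa using this
  have hK2one : (1:ℝ) ≤ K2 := one_le_two_rpow hs'0.le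
  have h4β : (0:ℝ) < (4:ℝ)^β := Real.rpow_pos_of_pos (by norm_num) _
  have h4s : (0:ℝ) < (4:ℝ)^((1+α)*β) := Real.rpow_pos_of_pos (by norm_num) _
  have h2M : (0:ℝ) < (2:ℝ)^(M+1) := by positivity
  set C5 : ℝ := Cch * (1 + (4:ℝ)^β + (4:ℝ)^((1+α)*β)) + (2:ℝ)^(M+1) with hC5def
  have hC5pos : 0 < C5 := by nlinarith
  have hK2pos : (0:ℝ) < K2 := by linarith
  have hK1pos : (0:ℝ) < K1 := by linarith
  have hCKKpos : (0:ℝ) < C5*K2*K1 := mul_pos (mul_pos hC5pos hK2pos) hK1pos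
  refine ⟨1 + C5*K2*K1, by linarith, ?_⟩
  intro t ht0 f hEsupTop hEBTop
  set Esup := ⨆ z, (‖f z‖₊ : ℝ≥0∞) with hEsupdef
  set EB := ⨆ (h : R2d d) (_ : h ≠ 0) (z : R2d d),
      ENNReal.ofReal (anorm α h ^ (-((1+α)*β)) * ‖deltaIter h (N + 1) f z‖) with hEBdef
  set F := Esup.toReal with hFdef
  set Bs := EB.toReal with hBsdef
  have hF0 : 0 ≤ F := ENNReal.toReal_nonneg
  have hBs0 : 0 ≤ Bs := ENNReal.toReal_nonneg
  have hfF : ∀ z, |f z| ≤ F := by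
    intro z
    have h1 : (‖f z‖₊ : ℝ≥0∞) ≤ Esup := le_iSup (fun z => ((‖f z‖₊ : ℝ≥0∞))) z
    have h2 := ENNReal.toReal_mono hEsupTop h1
    simpa [Real.norm_eq_abs] using h2
  have hpwB : ∀ k : R2d d, k ≠ 0 → ∀ z,
      |deltaIter k (N+1) f z| ≤ anorm α k ^ ((1+α)*β) * Bs := by
    intro k hk z
    have h1 : ENNReal.ofReal (anorm α k ^ (-((1+α)*β)) * ‖deltaIter k (N+1) f z‖) ≤ EB := by
      rw [hEBdef]
      exact le_iSup_of_le k (le_iSup_of_le hk (le_iSup_of_le z le_rfl))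
    have hx0 : 0 ≤ anorm α k ^ (-((1+α)*β)) * ‖deltaIter k (N+1) f z‖ :=
      mul_nonneg (Real.rpow_nonneg (anorm_nonneg α k) _) (norm_nonneg _)
    have h2 := ofReal_le_toReal_aux hEBTop h1 hx0
    have hapos := anorm_pos ⟨hα1,hα2⟩ k hk
    rw [Real.rpow_neg (anorm_nonneg α k), Real.norm_eq_abs,
      inv_mul_le_iff₀ (Real.rpow_pos_of_pos hapos _)] at h2
    exact h2
  -- uniform bound on iterated differences from sup norm
  have hunif : ∀ (m : ℕ) (k : R2d d) (z : R2d d), |deltaIter k m f z| ≤ 2^m * F := by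
    intro m k z
    have h1 := deltaIter_le_of_le k f F 0 hfF m z
    rwa [Nat.zero_add] at h1
  -- Stage 1 : embedding, to bound the β-seminorm of f
  set Sb1 : ℝ := K1 * (Bs + F) with hSb1def
  have hSb1nn : 0 ≤ Sb1 := by
    rw [hSb1def]; exact mul_nonneg (by linarith) (by linarith)
  have hmulK1 : (1:ℝ) * (Bs + F) ≤ K1 * (Bs + F) :=
    mul_le_mul_of_nonneg_right hK1one (by linarith)
  have hBsSb1 : Bs ≤ Sb1 := by rw [hSb1def]; linarith
  have hFSb1 : F ≤ Sb1 := by rw [hSb1def]; linarith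
  have h2N1F : (2:ℝ)^(N+1) * F ≤ Sb1 := by
    rw [hSb1def, hK1def]
    exact mul_le_mul_of_nonneg_left (by linarith) (by positivity)
  have hIn1b : ∀ k : R2d d, k ≠ 0 → ∀ z,
      |deltaIter k (N+1) f z| ≤ (min (anorm α k) 1)^((1+α)*β) * Sb1 := by
    intro k hk z
    rcases le_total (anorm α k) 1 with h1 | h1
    · rw [min_eq_left h1]
      calc |deltaIter k (N+1) f z| ≤ anorm α k ^ ((1+α)*β) * Bs := hpwB k hk z
        _ ≤ anorm α k ^ ((1+α)*β) * Sb1 :=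
            mul_le_mul_of_nonneg_left hBsSb1 (Real.rpow_nonneg (anorm_nonneg α k) _)
    · rw [min_eq_right h1, Real.one_rpow, one_mul]
      exact (hunif (N+1) k z).trans h2N1F
  have hIn1a : ∀ k : R2d d, k ≠ 0 → ∀ z,
      |deltaIter k (N+1) f z| ≤ (min (anorm α k) 1)^β * Sb1 := by
    intro k hk z
    have hapos := anorm_pos ⟨hα1,hα2⟩ k hk
    rcases le_total (anorm α k) 1 with h1 | h1
    · rw [min_eq_left h1]
      have hexp : anorm α k ^ ((1+α)*β) ≤ anorm α k ^ β :=
        Real.rpow_le_rpow_of_exponent_ge hapos h1 hββs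
      calc |deltaIter k (N+1) f z| ≤ anorm α k ^ ((1+α)*β) * Bs := hpwB k hk z
        _ ≤ anorm α k ^ β * Sb1 := by
            apply mul_le_mul hexp hBsSb1 hBs0 (Real.rpow_nonneg (anorm_nonneg α k) _)
    · rw [min_eq_right h1, Real.one_rpow, one_mul]
      exact (hunif (N+1) k z).trans h2N1F
  have hbase1 := baseG ⟨hα1,hα2⟩ hβ f Sb1 Sb1 (N+1) hSb1nn hSb1nn hIn1a hIn1b
  have hFK2Sb1 : F ≤ K2 * Sb1 := by
    have h1 : (1:ℝ) * Sb1 ≤ K2 * Sb1 := mul_le_mul_of_nonneg_right hK2one hSb1nn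
    linarith
  have hK2Sb1nn : 0 ≤ K2 * Sb1 := mul_nonneg (by linarith) hSb1nn
  have hembG := hchain f (K2*Sb1) (K2*Sb1) F hK2Sb1nn hK2Sb1nn hF0 hFK2Sb1 hFK2Sb1 hfF hbase1
  -- β seminorm of f is finite
  set EA := ⨆ (h : R2d d) (_ : h ≠ 0) (z : R2d d),
      ENNReal.ofReal (anorm α h ^ (-β) * ‖deltaIter h (M + 1) f z‖) with hEAdef
  have hGtoa : ∀ (A B : ℝ), 0 ≤ A → 0 ≤ B → ∀ k : R2d d, k ≠ 0 →
      Gfun α β ((1+α)*β) A B k ≤ anorm α k ^ β * (A + B) := by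
    intro A B hA hB k hk
    have hapos := anorm_pos ⟨hα1,hα2⟩ k hk
    have haβ : (0:ℝ) ≤ anorm α k ^ β := Real.rpow_nonneg (anorm_nonneg α k) _
    have hq : min (qA k) 1 ≤ anorm α k := by
      have : qA k ≤ anorm α k := by
        show qA k ≤ pA α k + qA k
        have := pA_nonneg α k; linarith
      exact (min_le_left _ _).trans this
    have hp : min (pA α k) 1 ≤ anorm α k := by
      have : pA α k ≤ anorm α k := by
        show pA α k ≤ pA α k + qA k
        have := qA_nonneg k; linarith
      exact (min_le_left _ _).trans this
    have hminq : (0:ℝ) ≤ min (qA k) 1 := le_min (qA_nonneg k) zero_le_one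
    have hminp : (0:ℝ) ≤ min (pA α k) 1 := le_min (pA_nonneg α k) zero_le_one
    have e1 : (min (qA k) 1)^β ≤ anorm α k ^ β := Real.rpow_le_rpow hminq hq hβ.le
    have e2 : (min (pA α k) 1)^β ≤ anorm α k ^ β := Real.rpow_le_rpow hminp hp hβ.le
    unfold Gfun
    have e5 : (min (qA k) 1)^β * A ≤ anorm α k ^ β * A := mul_le_mul_of_nonneg_right e1 hA
    have e7 : (min (pA α k) 1)^((1+α)*β) ≤ (min (pA α k) 1)^β := by
      rcases eq_or_lt_of_le hminp with h0 | h0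
      · rw [← h0, Real.zero_rpow (ne_of_gt hs'0), Real.zero_rpow (ne_of_gt hβ)]
      · exact Real.rpow_le_rpow_of_exponent_ge h0 (min_le_right _ _) hββs
    have e8 : (min (pA α k) 1)^((1+α)*β) * B ≤ anorm α k ^ β * B :=
      mul_le_mul_of_nonneg_right (e7.trans e2) hB
    have e9 : min ((min (pA α k) 1) ^ β * A) ((min (pA α k) 1) ^ ((1+α)*β) * B)
        ≤ anorm α k ^ β * B := (min_le_right _ _).trans e8
    have e10 : anorm α k ^ β * (A+B) = anorm α k ^ β * A + anorm α k ^ β * B := by ring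
    linarith
  have hEAle : EA ≤ ENNReal.ofReal (Cch * (K2*Sb1 + K2*Sb1)) := by
    rw [hEAdef]
    refine iSup_le fun h => iSup_le fun hh => iSup_le fun z => ?_
    apply ENNReal.ofReal_le_ofReal
    have hapos := anorm_pos ⟨hα1,hα2⟩ h hh
    have h1 := (hembG h hh z).trans
      (mul_le_mul_of_nonneg_left (hGtoa (K2*Sb1) (K2*Sb1) hK2Sb1nn hK2Sb1nn h hh) (by linarith))
    -- h1 : |δ^{M+1} f z| ≤ Cch * (anorm^β * (K2Sb1 + K2Sb1))
    rw [Real.norm_eq_abs, Real.rpow_neg (anorm_nonneg α h),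
      inv_mul_le_iff₀ (Real.rpow_pos_of_pos hapos _)]
    calc |deltaIter h (M+1) f z| ≤ Cch * (anorm α h ^ β * (K2*Sb1 + K2*Sb1)) := h1
      _ = anorm α h ^ β * (Cch * (K2*Sb1 + K2*Sb1)) := by ring
  have hEATop : EA ≠ ⊤ := (lt_of_le_of_lt hEAle ENNReal.ofReal_lt_top).ne
  set As := EA.toReal with hAsdef
  have hAs0 : 0 ≤ As := ENNReal.toReal_nonneg
  have hpwA : ∀ k : R2d d, k ≠ 0 → ∀ z,
      |deltaIter k (M+1) f z| ≤ anorm α k ^ β * As := by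
    intro k hk z
    have h1 : ENNReal.ofReal (anorm α k ^ (-β) * ‖deltaIter k (M+1) f z‖) ≤ EA := by
      rw [hEAdef]
      exact le_iSup_of_le k (le_iSup_of_le hk (le_iSup_of_le z le_rfl))
    have hx0 : 0 ≤ anorm α k ^ (-β) * ‖deltaIter k (M+1) f z‖ :=
      mul_nonneg (Real.rpow_nonneg (anorm_nonneg α k) _) (norm_nonneg _)
    have h2 := ofReal_le_toReal_aux hEATop h1 hx0
    have hapos := anorm_pos ⟨hα1,hα2⟩ k hk
    rw [Real.rpow_neg (anorm_nonneg α k), Real.norm_eq_abs,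
      inv_mul_le_iff₀ (Real.rpow_pos_of_pos hapos _)] at h2
    exact h2
  -- Stage 2 : the main Hölder bound for f with two norms
  set Sa2 : ℝ := K1 * (As + F) with hSa2def
  have hSa2nn : 0 ≤ Sa2 := by
    rw [hSa2def]; exact mul_nonneg (by linarith) (by linarith)
  have h2NMK1 : (2:ℝ)^(N-M) ≤ K1 := by
    rw [hK1def]
    exact pow_le_pow_right₀ (by norm_num) (by omega)
  have hIn2a : ∀ k : R2d d, k ≠ 0 → ∀ z,
      |deltaIter k (N+1) f z| ≤ (min (anorm α k) 1)^β * Sa2 := by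
    intro k hk z
    rcases le_total (anorm α k) 1 with h1 | h1
    · rw [min_eq_left h1]
      have hup := deltaIter_le_of_le k f (anorm α k ^ β * As) (M+1) (hpwA k hk) (N-M) z
      have hidx : (M+1) + (N-M) = N+1 := by omega
      rw [hidx] at hup
      have haβ : (0:ℝ) ≤ anorm α k ^ β := Real.rpow_nonneg (anorm_nonneg α k) _
      calc |deltaIter k (N+1) f z| ≤ 2^(N-M) * (anorm α k ^ β * As) := hup
        _ = anorm α k ^ β * ((2:ℝ)^(N-M) * As) := by ring
        _ ≤ anorm α k ^ β * Sa2 := by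
            apply mul_le_mul_of_nonneg_left _ haβ
            rw [hSa2def]
            have h1 : (2:ℝ)^(N-M) * As ≤ K1 * As :=
              mul_le_mul_of_nonneg_right h2NMK1 hAs0
            have h2 : K1 * As ≤ K1 * (As + F) :=
              mul_le_mul_of_nonneg_left (by linarith) (by linarith)
            linarith
    · rw [min_eq_right h1, Real.one_rpow, one_mul]
      have : (2:ℝ)^(N+1) * F ≤ Sa2 := by
        rw [hSa2def, hK1def]
        exact mul_le_mul_of_nonneg_left (by linarith) (by positivity)
      exact (hunif (N+1) k z).trans this
  have hbase2 := baseG ⟨hα1,hα2⟩ hβ f Sa2 Sb1 (N+1) hSa2nn hSb1nn hIn2a hIn1b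
  have hFK2Sa2 : F ≤ K2 * Sa2 := by
    have h0 : F ≤ Sa2 := by
      rw [hSa2def]
      have h1 : (1:ℝ) * (As + F) ≤ K1 * (As + F) :=
        mul_le_mul_of_nonneg_right hK1one (by linarith)
      linarith
    have h1 : (1:ℝ) * Sa2 ≤ K2 * Sa2 := mul_le_mul_of_nonneg_right hK2one hSa2nn
    linarith
  have hK2Sa2nn : 0 ≤ K2 * Sa2 := mul_nonneg (by linarith) hSa2nn
  have hmainG := hchain f (K2*Sa2) (K2*Sb1) F hK2Sa2nn hK2Sb1nn hF0 hFK2Sa2 hFK2Sb1 hfF hbase2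
  -- Transport estimate (pointwise)
  have hunifM : ∀ (k : R2d d) (z : R2d d), |deltaIter k (M+1) f z| ≤ 2^(M+1) * F :=
    fun k z => hunif (M+1) k z
  have htrans := transport_pointwise ⟨hα1,hα2⟩ hβ t (K2*Sa2) (K2*Sb1) Cch ht0
    hK2Sa2nn hK2Sb1nn hCch1 f F hF0 hFK2Sa2 hunifM hmainG
  set C5 : ℝ := Cch * (1 + (4:ℝ)^β + (4:ℝ)^((1+α)*β)) + (2:ℝ)^(M+1) with hC5def
  have h4β : (0:ℝ) < (4:ℝ)^β := Real.rpow_pos_of_pos (by norm_num) _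
  have h4s : (0:ℝ) < (4:ℝ)^((1+α)*β) := Real.rpow_pos_of_pos (by norm_num) _
  have h2M : (0:ℝ) < (2:ℝ)^(M+1) := by positivity
  have hC5pos : 0 < C5 := by
    rw [hC5def]
    have h1 : (0:ℝ) ≤ Cch * (1 + (4:ℝ)^β + (4:ℝ)^((1+α)*β)) :=
      mul_nonneg (by linarith) (by positivity)
    linarith
  have htβ0 : (0:ℝ) ≤ t^β := Real.rpow_nonneg ht0 β
  have hW0 : 0 ≤ C5 * (K2*Sa2 + t^β*(K2*Sb1)) :=
    mul_nonneg hC5pos.le (add_nonneg hK2Sa2nn (mul_nonneg htβ0 hK2Sb1nn))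
  -- Packaging
  have hsup' : (⨆ z, (‖f (Gam t z)‖₊ : ℝ≥0∞)) ≤ ENNReal.ofReal F := by
    refine iSup_le fun z => ?_
    rw [← ENNReal.ofReal_coe_nnreal, coe_nnnorm]
    apply ENNReal.ofReal_le_ofReal
    rw [Real.norm_eq_abs]
    exact hfF _
  have hsemi' : (⨆ (h : R2d d) (_ : h ≠ 0) (z : R2d d),
        ENNReal.ofReal (anorm α h ^ (-β) * ‖deltaIter h (M + 1) (fun w => f (Gam t w)) z‖))
      ≤ ENNReal.ofReal (C5*(K2*Sa2 + t^β*(K2*Sb1))) := by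
    refine iSup_le fun h => iSup_le fun hh => iSup_le fun z => ?_
    apply ENNReal.ofReal_le_ofReal
    rw [Real.norm_eq_abs]
    exact htrans h hh z
  have hAval : (Esup + EA).toReal = F + As := ENNReal.toReal_add hEsupTop hEATop
  have hBval : (Esup + EB).toReal = F + Bs := ENNReal.toReal_add hEsupTop hEBTop
  have hreal : F + C5*(K2*Sa2 + t^β*(K2*Sb1))
      ≤ (1 + C5*K2*K1) * ((F + As) + t^β * (F + Bs)) := by
    have hRAval : K2*Sa2 = K2*K1*(F+As) := by rw [hSa2def]; ring
    have hRBval : K2*Sb1 = K2*K1*(F+Bs) := by rw [hSb1def]; ring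
    have hBr0 : 0 ≤ F + Bs := by linarith
    have hAr0 : 0 ≤ F + As := by linarith
    have htBr0 : 0 ≤ t^β*(F+Bs) := mul_nonneg htβ0 hBr0
    have hexp : C5*(K2*Sa2 + t^β*(K2*Sb1)) = (C5*K2*K1) * ((F+As) + t^β*(F+Bs)) := by
      rw [hRAval, hRBval]; ring
    have hsum0 : 0 ≤ (F+As) + t^β*(F+Bs) := by linarith
    have hone : (1:ℝ) * ((F+As) + t^β*(F+Bs)) ≤ (1 + C5*K2*K1) * ((F+As) + t^β*(F+Bs)) := by
      apply mul_le_mul_of_nonneg_right _ hsum0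
      have : 0 < C5*K2*K1 := mul_pos (mul_pos hC5pos hK2pos) hK1pos
      linarith
    have hexpand : (1 + C5*K2*K1) * ((F+As) + t^β*(F+Bs))
        = 1 * ((F+As) + t^β*(F+Bs)) + (C5*K2*K1) * ((F+As) + t^β*(F+Bs)) := by ring
    have hFle : F ≤ 1 * ((F+As) + t^β*(F+Bs)) := by
      rw [one_mul]; linarith
    linarith [hexp, hexpand, hFle]
  calc (⨆ z, (‖f (Gam t z)‖₊ : ℝ≥0∞)) +
        ⨆ (h : R2d d) (_ : h ≠ 0) (z : R2d d),
          ENNReal.ofReal (anorm α h ^ (-β) * ‖deltaIter h (M + 1) (fun w => f (Gam t w)) z‖)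
      ≤ ENNReal.ofReal F + ENNReal.ofReal (C5*(K2*Sa2 + t^β*(K2*Sb1))) :=
        add_le_add hsup' hsemi'
    _ = ENNReal.ofReal (F + C5*(K2*Sa2 + t^β*(K2*Sb1))) := (ENNReal.ofReal_add hF0 hW0).symm
    _ ≤ ENNReal.ofReal ((1 + C5*K2*K1) * ((Esup + EA).toReal + t^β * (Esup + EB).toReal)) := by
        apply ENNReal.ofReal_le_ofReal
        rw [hAval, hBval]
        exact hreal
end Main

end TransportAux

/-- Anisotropic Hölder bound for the free-transport operator. -/
theorem transport_operator_holder_bound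
    {d : ℕ} (hd : 1 ≤ d) (α β T : ℝ) (hα : α ∈ Ioo (1 : ℝ) 2) (hβ : 0 < β) (hT : 0 < T) :
    ∃ C > (0 : ℝ), ∀ t : ℝ, t ∈ Icc (0 : ℝ) T →
      ∀ f : R2d d → ℝ, aHolderNorm α ((1 + α) * β) f < ⊤ →
        aHolderNorm α β (fun z => f (Gam t z))
          ≤ ENNReal.ofReal
              (C * ((aHolderNorm α β f).toReal
                + t ^ β * (aHolderNorm α ((1 + α) * β) f).toReal)) := by
  obtain ⟨C, hC, hmain⟩ := transport_main (d := d) hα hβ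
  refine ⟨C, hC, ?_⟩
  intro t ht f hfin
  have hsplit : aHolderNorm α ((1+α)*β) f
      = (⨆ z, (‖f z‖₊ : ℝ≥0∞)) +
        ⨆ (h : R2d d) (_ : h ≠ 0) (z : R2d d),
          ENNReal.ofReal (anorm α h ^ (-((1+α)*β)) * ‖deltaIter h (⌊(1+α)*β⌋₊ + 1) f z‖) := rfl
  rw [hsplit] at hfin
  obtain ⟨h1, h2⟩ := ENNReal.add_lt_top.mp hfin
  exact hmain t ht.1 f h1.ne h2.ne
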